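/- The set of Z₄×Z₂ group determinants over the integers equals {8m+1 : m ∈ ℤ} ∪ {2⁸m : m ∈ ℤ}. -/

import Mathlib

def NN (x0 x1 x2 x3 : ℤ) : ℤ :=
  (x0 + x1 + x2 + x3) * (x0 - x1 + x2 - x3) * ((x0 - x2)^2 + (x1 - x3)^2)

def e2 : Fin 4 ≃ ZMod 4 where
  toFun i := (i.val : ZMod 4)
  invFun z := ⟨z.val, z.val_lt⟩
  left_inv := by decide
  right_inv := by decide

theorem circdet (c : ZMod 4 → ℤ) :
    (Matrix.of fun i j : ZMod 4 => c (i - j)).det = NN (c 0) (c 1) (c 2) (c 3) := by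
  rw [← Matrix.det_submatrix_equiv_self e2]
  have h : (Matrix.of fun i j : ZMod 4 => c (i - j)).submatrix e2 e2 =
      !![c 0, c 3, c 2, c 1; c 1, c 0, c 3, c 2; c 2, c 1, c 0, c 3; c 3, c 2, c 1, c 0] := by
    ext i j
    fin_cases i <;> fin_cases j <;> rfl
  rw [h]
  simp [Matrix.det_succ_row_zero, Fin.sum_univ_succ, Fin.succAbove,
    show (Fin.castSucc 2 : Fin 4) = 2 from rfl, NN]
  ring

def eSum : ZMod 4 ⊕ ZMod 4 ≃ ZMod 4 × ZMod 2 where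
  toFun := Sum.elim (fun i => (i, 0)) (fun i => (i, 1))
  invFun p := if p.2 = 0 then .inl p.1 else .inr p.1
  left_inv := by decide
  right_inv := by decide

theorem blockdet {n : Type*} [DecidableEq n] [Fintype n] (A B : Matrix n n ℤ) :
    (Matrix.fromBlocks A B B A).det = (A + B).det * (A - B).det := by
  have h : Matrix.fromBlocks (1 : Matrix n n ℤ) 1 0 1 * Matrix.fromBlocks A B B A *
      Matrix.fromBlocks (1 : Matrix n n ℤ) (-1) 0 1 =
      Matrix.fromBlocks (A + B) 0 B (A - B) := by
    simp [Matrix.fromBlocks_multiply, Matrix.mul_one, Matrix.one_mul]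
    constructor
    · abel
    · abel
  have := congrArg Matrix.det h
  rw [Matrix.det_mul, Matrix.det_mul, Matrix.det_fromBlocks_zero₂₁,
    Matrix.det_fromBlocks_zero₂₁, Matrix.det_fromBlocks_zero₁₂, Matrix.det_one] at this
  simpa using this

set_option linter.unreachableTactic false in
set_option linter.unusedTactic false in
theorem keyfact (v : ZMod 4 × ZMod 2 → ℤ) :
    (Matrix.of fun g h : ZMod 4 × ZMod 2 => v (g - h)).det =
    NN (v (0,0) + v (0,1)) (v (1,0) + v (1,1)) (v (2,0) + v (2,1)) (v (3,0) + v (3,1)) *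
    NN (v (0,0) - v (0,1)) (v (1,0) - v (1,1)) (v (2,0) - v (2,1)) (v (3,0) - v (3,1)) := by
  rw [← Matrix.det_submatrix_equiv_self eSum]
  have h : (Matrix.of fun g h : ZMod 4 × ZMod 2 => v (g - h)).submatrix eSum eSum =
      Matrix.fromBlocks (Matrix.of fun i j : ZMod 4 => v (i - j, 0))
        (Matrix.of fun i j : ZMod 4 => v (i - j, 1))
        (Matrix.of fun i j : ZMod 4 => v (i - j, 1))
        (Matrix.of fun i j : ZMod 4 => v (i - j, 0)) := by
    ext x y
    rcases x with i | i <;> rcases y with j | j <;>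
      simp [eSum, Matrix.fromBlocks, Prod.mk_sub_mk] <;> congr 1 <;> decide
  rw [h, blockdet]
  have hadd : (Matrix.of fun i j : ZMod 4 => v (i - j, 0)) +
      (Matrix.of fun i j : ZMod 4 => v (i - j, 1)) =
      Matrix.of fun i j : ZMod 4 => (fun x => v (x, 0) + v (x, 1)) (i - j) := by
    ext i j; simp
  have hsub : (Matrix.of fun i j : ZMod 4 => v (i - j, 0)) -
      (Matrix.of fun i j : ZMod 4 => v (i - j, 1)) =
      Matrix.of fun i j : ZMod 4 => (fun x => v (x, 0) - v (x, 1)) (i - j) := by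
    ext i j; simp
  rw [hadd, hsub, circdet (fun x => v (x,0) + v (x,1)), circdet (fun x => v (x,0) - v (x,1))]

lemma sq_odd_mod8 {n : ℤ} (h : Odd n) : n ^ 2 ≡ 1 [ZMOD 8] := by
  obtain ⟨x, rfl⟩ := h
  obtain ⟨w, hw⟩ := Int.even_mul_succ_self x
  have : (2 * x + 1) ^ 2 = 1 + 8 * w := by nlinarith [hw]
  rw [this]; unfold Int.ModEq; omega

lemma nn_oddA {x0 x1 x2 x3 : ℤ} (hA : Odd (x0 + x2)) (hB : Even (x1 + x3)) :
    NN x0 x1 x2 x3 ≡ 1 - 4 * (x1 * x3) [ZMOD 8] := by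
  have hC : Odd (x0 - x2) := by obtain ⟨k, hk⟩ := hA; exact ⟨k - x2, by omega⟩
  obtain ⟨b, hb⟩ := hB
  have hNN : NN x0 x1 x2 x3 =
      ((x0+x2)^2 - (x1+x3)^2) * ((x0-x2)^2 + (x1-x3)^2) := by unfold NN; ring
  have h1 : ((x0+x2)^2 - (x1+x3)^2) ≡ 1 - (x1+x3)^2 [ZMOD 8] :=
    (sq_odd_mod8 hA).sub (Int.ModEq.refl _)
  have h2 : ((x0-x2)^2 + (x1-x3)^2) ≡ 1 + (x1-x3)^2 [ZMOD 8] :=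
    (sq_odd_mod8 hC).add (Int.ModEq.refl _)
  have h3 : (1 - (x1+x3)^2) * (1 + (x1-x3)^2) ≡ 1 - 4 * (x1 * x3) [ZMOD 8] := by
    rw [Int.modEq_comm, Int.modEq_iff_dvd]
    refine ⟨-(2 * (b * (x1-b))^2), ?_⟩
    have hx3 : x3 = 2*b - x1 := by omega
    subst hx3; ring
  rw [hNN]
  exact (h1.mul h2).trans h3

lemma nn_oddB {x0 x1 x2 x3 : ℤ} (hA : Even (x0 + x2)) (hB : Odd (x1 + x3)) :
    NN x0 x1 x2 x3 ≡ 4 * (x0 * x2) - 1 [ZMOD 8] := by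
  obtain ⟨a, ha⟩ := hA
  have hE : Odd (x1 - x3) := by obtain ⟨k, hk⟩ := hB; exact ⟨k - x3, by omega⟩
  have hNN : NN x0 x1 x2 x3 =
      ((x0+x2)^2 - (x1+x3)^2) * ((x0-x2)^2 + (x1-x3)^2) := by unfold NN; ring
  have h1 : ((x0+x2)^2 - (x1+x3)^2) ≡ (x0+x2)^2 - 1 [ZMOD 8] :=
    (Int.ModEq.refl _).sub (sq_odd_mod8 hB)
  have h2 : ((x0-x2)^2 + (x1-x3)^2) ≡ (x0-x2)^2 + 1 [ZMOD 8] :=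
    (Int.ModEq.refl _).add (sq_odd_mod8 hE)
  have h3 : ((x0+x2)^2 - 1) * ((x0-x2)^2 + 1) ≡ 4 * (x0 * x2) - 1 [ZMOD 8] := by
    rw [Int.modEq_comm, Int.modEq_iff_dvd]
    refine ⟨2 * (a * (x0-a))^2, ?_⟩
    have hx2 : x2 = 2*a - x0 := by omega
    subst hx2; ring
  rw [hNN]
  exact (h1.mul h2).trans h3

lemma nn_even {x0 x1 x2 x3 : ℤ} (h : Even (x0 + x1 + x2 + x3)) :
    (16 : ℤ) ∣ NN x0 x1 x2 x3 := by
  have hNN : NN x0 x1 x2 x3 =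
      ((x0+x2)^2 - (x1+x3)^2) * ((x0-x2)^2 + (x1-x3)^2) := by unfold NN; ring
  rcases Int.even_or_odd (x0 + x2) with hA | hA
  · obtain ⟨a, ha⟩ := hA
    have hB : Even (x1 + x3) := by
      rcases Int.even_or_odd (x1+x3) with h'|h'
      · exact h'
      · exfalso; obtain ⟨k,hk⟩ := h'; obtain ⟨l,hl⟩ := h; omega
    obtain ⟨b, hb⟩ := hB
    have hC : ∃ c, x0 - x2 = 2*c := ⟨x0 - a, by omega⟩
    have hE : ∃ e, x1 - x3 = 2*e := ⟨x1 - b, by omega⟩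
    obtain ⟨c, hc⟩ := hC; obtain ⟨e, he⟩ := hE
    refine ⟨(a^2 - b^2) * (c^2 + e^2), ?_⟩
    rw [hNN, ha, hb, hc, he]; ring
  · have hB : Odd (x1 + x3) := by
      obtain ⟨k,hk⟩ := hA; rcases Int.even_or_odd (x1+x3) with h'|h'
      · exfalso; obtain ⟨l,hl⟩ := h'; obtain ⟨w,hw⟩ := h; omega
      · exact h'
    have h8 : (8:ℤ) ∣ ((x0+x2)^2 - (x1+x3)^2) := by
      have h1 := sq_odd_mod8 hA
      have h2 := sq_odd_mod8 hB
      have := h1.sub h2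
      simpa using (Int.ModEq.dvd this.symm)
    have h2 : (2:ℤ) ∣ ((x0-x2)^2 + (x1-x3)^2) := by
      have hCo : Odd (x0 - x2) := by obtain ⟨k,hk⟩ := hA; exact ⟨k - x2, by omega⟩
      have hEo : Odd (x1 - x3) := by obtain ⟨k,hk⟩ := hB; exact ⟨k - x3, by omega⟩
      obtain ⟨p,hp⟩ := hCo; obtain ⟨q,hq⟩ := hEo
      exact ⟨2*p^2+2*p+2*q^2+2*q+1, by rw [hp, hq]; ring⟩
    obtain ⟨u, hu⟩ := h8; obtain ⟨w, hw⟩ := h2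
    exact ⟨u * w, by rw [hNN, hu, hw]; ring⟩

lemma evenmul {a b c d : ℤ} (h1 : Even (a+b)) (h2 : Even (c+d)) : Even (a*c + b*d) := by
  obtain ⟨p, hp⟩ := h1; obtain ⟨q, hq⟩ := h2
  have hb : b = 2*p - a := by omega
  have hd : d = 2*q - c := by omega
  subst hb; subst hd
  exact ⟨a*c + 2*p*q - p*c - q*a, by ring⟩

lemma combine (s0 s1 s2 s3 t0 t1 t2 t3 : ℤ)
    (h0 : Even (s0+t0)) (h1 : Even (s1+t1)) (h2 : Even (s2+t2)) (h3 : Even (s3+t3)) :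
    (∃ m : ℤ, NN s0 s1 s2 s3 * NN t0 t1 t2 t3 = 8*m+1) ∨
    (∃ m : ℤ, NN s0 s1 s2 s3 * NN t0 t1 t2 t3 = 2^8 * m) := by
  rw [Int.even_iff] at h0 h1 h2 h3
  rcases Int.even_or_odd (s0+s1+s2+s3) with hP | hP
  · right
    have hQ : Even (t0+t1+t2+t3) := by
      rw [Int.even_iff] at hP ⊢; omega
    obtain ⟨u, hu⟩ := nn_even hP
    obtain ⟨w, hw⟩ := nn_even hQ
    exact ⟨u * w, by rw [hu, hw]; ring⟩
  · left
    rcases Int.even_or_odd (s0+s2) with hA | hA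
    · have hBs : Odd (s1+s3) := by
        rw [Int.even_iff] at hA; rw [Int.odd_iff] at hP ⊢; omega
      have hAt : Even (t0+t2) := by rw [Int.even_iff] at hA ⊢; omega
      have hBt : Odd (t1+t3) := by rw [Int.odd_iff] at hBs ⊢; omega
      have key := (nn_oddB hA hBs).mul (nn_oddB hAt hBt)
      have heven : Even (s0*s2 + t0*t2) :=
        evenmul (by rw [Int.even_iff]; omega) (by rw [Int.even_iff]; omega)
      obtain ⟨w, hw⟩ := heven
      have h4 : (4 * (s0 * s2) - 1) * (4 * (t0 * t2) - 1) ≡ 1 [ZMOD 8] := by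
        rw [Int.modEq_comm, Int.modEq_iff_dvd]
        refine ⟨2 * (s0*s2) * (t0*t2) - w, ?_⟩
        have : t0*t2 = 2*w - s0*s2 := by omega
        rw [this]; ring
      have := key.trans h4
      rw [Int.modEq_iff_dvd] at this
      obtain ⟨m, hm⟩ := this
      exact ⟨-m, by linarith⟩
    · have hBs : Even (s1+s3) := by
        rw [Int.odd_iff] at hA hP; rw [Int.even_iff]; omega
      have hAt : Odd (t0+t2) := by rw [Int.odd_iff] at hA ⊢; omega
      have hBt : Even (t1+t3) := by rw [Int.even_iff] at hBs ⊢; omega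
      have key := (nn_oddA hA hBs).mul (nn_oddA hAt hBt)
      have heven : Even (s1*s3 + t1*t3) :=
        evenmul (by rw [Int.even_iff]; omega) (by rw [Int.even_iff]; omega)
      obtain ⟨w, hw⟩ := heven
      have h4 : (1 - 4 * (s1 * s3)) * (1 - 4 * (t1 * t3)) ≡ 1 [ZMOD 8] := by
        rw [Int.modEq_comm, Int.modEq_iff_dvd]
        refine ⟨2 * (s1*s3) * (t1*t3) - w, ?_⟩
        have : t1*t3 = 2*w - s1*s3 := by omega
        rw [this]; ring
      have := key.trans h4
      rw [Int.modEq_iff_dvd] at this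
      obtain ⟨m, hm⟩ := this
      exact ⟨-m, by linarith⟩

def vA (m : ℤ) : ZMod 4 × ZMod 2 → ℤ := fun p => if p = 0 then m + 1 else m

def vB (k : ℤ) : ZMod 4 × ZMod 2 → ℤ := fun p =>
  if p.2 = 1 then k else if p.1 = 0 then k+2 else if p.1 = 3 then k else k+1

def vC (k : ℤ) : ZMod 4 × ZMod 2 → ℤ := fun p =>
  if p.2 = 0 then (if p.1 = 0 ∨ p.1 = 2 then k+1 else k)
  else (if p.1 = 0 ∨ p.1 = 1 then k-1 else k)

theorem Z4xZ2_det_values (d : ℤ) :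
    (∃ v : ZMod 4 × ZMod 2 → ℤ,
      (Matrix.of fun g h : ZMod 4 × ZMod 2 => v (g - h)).det = d) ↔
    ((∃ m : ℤ, d = 8*m+1) ∨ (∃ m : ℤ, d = 2^8 * m)) := by
  constructor
  · rintro ⟨v, hv⟩
    rw [keyfact v] at hv
    have h0 : Even ((v (0,0) + v (0,1)) + (v (0,0) - v (0,1))) := ⟨v (0,0), by ring⟩
    have h1 : Even ((v (1,0) + v (1,1)) + (v (1,0) - v (1,1))) := ⟨v (1,0), by ring⟩
    have h2 : Even ((v (2,0) + v (2,1)) + (v (2,0) - v (2,1))) := ⟨v (2,0), by ring⟩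
    have h3 : Even ((v (3,0) + v (3,1)) + (v (3,0) - v (3,1))) := ⟨v (3,0), by ring⟩
    rcases combine _ _ _ _ _ _ _ _ h0 h1 h2 h3 with ⟨m, hm⟩ | ⟨m, hm⟩
    · exact Or.inl ⟨m, by rw [← hv, hm]⟩
    · exact Or.inr ⟨m, by rw [← hv, hm]⟩
  · rintro (⟨m, rfl⟩ | ⟨m, rfl⟩)
    · refine ⟨vA m, ?_⟩
      rw [keyfact (vA m)]
      have e1 : vA m (0,0) = m + 1 := rfl
      have e2 : vA m (0,1) = m := rfl
      have e3 : vA m (1,0) = m := rfl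
      have e4 : vA m (1,1) = m := rfl
      have e5 : vA m (2,0) = m := rfl
      have e6 : vA m (2,1) = m := rfl
      have e7 : vA m (3,0) = m := rfl
      have e8 : vA m (3,1) = m := rfl
      rw [e1, e2, e3, e4, e5, e6, e7, e8]
      unfold NN; ring
    · rcases Int.even_or_odd m with ⟨k, hk⟩ | ⟨k, hk⟩
      · refine ⟨vC k, ?_⟩
        rw [keyfact (vC k)]
        have e1 : vC k (0,0) = k + 1 := rfl
        have e2 : vC k (0,1) = k - 1 := rfl
        have e3 : vC k (1,0) = k := rfl
        have e4 : vC k (1,1) = k - 1 := rfl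
        have e5 : vC k (2,0) = k + 1 := rfl
        have e6 : vC k (2,1) = k := rfl
        have e7 : vC k (3,0) = k := rfl
        have e8 : vC k (3,1) = k := rfl
        rw [e1, e2, e3, e4, e5, e6, e7, e8, hk]
        unfold NN; ring
      · refine ⟨vB k, ?_⟩
        rw [keyfact (vB k)]
        have e1 : vB k (0,0) = k + 2 := rfl
        have e2 : vB k (0,1) = k := rfl
        have e3 : vB k (1,0) = k + 1 := rfl
        have e4 : vB k (1,1) = k := rfl
        have e5 : vB k (2,0) = k + 1 := rfl
        have e6 : vB k (2,1) = k := rfl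
        have e7 : vB k (3,0) = k := rfl
        have e8 : vB k (3,1) = k := rfl
        rw [e1, e2, e3, e4, e5, e6, e7, e8, hk]
        unfold NN; ring
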